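/- Let q be a prime power and let A(X), B(X) ∈ 𝔽_q[X]. If A has pseudodegree at most k₁ and B has pseudodegree at most k₂, then the product A(X)·B(X) has pseudodegree at most k₁ + k₂. -/

import Mathlib

open Polynomial

/-- `A ∈ 𝔽_q[X]` has pseudodegree at most `k`: for every `ℓ ≥ 0`, the remainder of the
`ℓ`-th Hasse derivative of `A` upon division by `Λ(X) = X^q - X` has degree at most `k`. -/
def PdegLE {F : Type*} [Field F] (q : ℕ) (A : F[X]) (k : ℕ) : Prop :=
  ∀ ℓ : ℕ, ((hasseDeriv ℓ A) %ₘ (X ^ q - X)).degree ≤ (k : WithBot ℕ)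

lemma mod_mul_degree_le {F : Type*} [Field F] {q : ℕ} (hq2 : 2 ≤ q)
    (f g : F[X]) {k₁ k₂ : ℕ}
    (hf : (f %ₘ (X ^ q - X)).degree ≤ (k₁ : WithBot ℕ))
    (hg : (g %ₘ (X ^ q - X)).degree ≤ (k₂ : WithBot ℕ)) :
    ((f * g) %ₘ (X ^ q - X)).degree ≤ ((k₁ + k₂ : ℕ) : WithBot ℕ) := by
  set Λ : F[X] := X ^ q - X with hΛ
  have hmonic : Λ.Monic := by
    apply monic_X_pow_sub
    calc (X : F[X]).degree = 1 := degree_X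
    _ < (q : WithBot ℕ) := by exact_mod_cast hq2
  have hdegΛ : Λ.degree = (q : WithBot ℕ) := by
    rw [hΛ, degree_sub_eq_left_of_degree_lt, degree_X_pow]
    rw [degree_X_pow, degree_X]
    exact_mod_cast hq2
  have hcong : (f * g) %ₘ Λ = ((f %ₘ Λ) * (g %ₘ Λ)) %ₘ Λ := by
    apply modByMonic_eq_of_dvd_sub hmonic
    have h1 : Λ ∣ f - f %ₘ Λ := ⟨f /ₘ Λ, by
      have := modByMonic_add_div f Λ
      linear_combination -this⟩
    have h2 : Λ ∣ g - g %ₘ Λ := ⟨g /ₘ Λ, by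
      have := modByMonic_add_div g Λ
      linear_combination -this⟩
    have : f * g - (f %ₘ Λ) * (g %ₘ Λ) =
        (f - f %ₘ Λ) * g + (f %ₘ Λ) * (g - g %ₘ Λ) := by ring
    rw [this]
    exact dvd_add (h1.mul_right _) (h2.mul_left _)
  by_cases hcase : q ≤ k₁ + k₂
  · have hlt := degree_modByMonic_lt (f * g) hmonic
    rw [hdegΛ] at hlt
    exact le_of_lt (lt_of_lt_of_le hlt (by exact_mod_cast hcase))
  · push_neg at hcase
    have hd : ((f %ₘ Λ) * (g %ₘ Λ)).degree ≤ ((k₁ + k₂ : ℕ) : WithBot ℕ) := by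
      calc ((f %ₘ Λ) * (g %ₘ Λ)).degree ≤ (f %ₘ Λ).degree + (g %ₘ Λ).degree :=
            degree_mul_le _ _
      _ ≤ (k₁ : WithBot ℕ) + (k₂ : WithBot ℕ) := add_le_add hf hg
      _ = ((k₁ + k₂ : ℕ) : WithBot ℕ) := by exact_mod_cast rfl
    rw [hcong, (modByMonic_eq_self_iff hmonic).2]
    · exact hd
    · rw [hdegΛ]
      exact lt_of_le_of_lt hd (by exact_mod_cast hcase)

/-- If `A` has pseudodegree at most `k₁` and `B` has pseudodegree at most
`k₂`, then `A·B` has pseudodegree at most `k₁ + k₂`. -/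
theorem stmt5 {F : Type*} [Field F] [Fintype F] (q : ℕ) (hq : Fintype.card F = q)
    (A B : F[X]) (k₁ k₂ : ℕ)
    (hA : PdegLE q A k₁) (hB : PdegLE q B k₂) :
    PdegLE q (A * B) (k₁ + k₂) := by
  have hq2 : 2 ≤ q := hq ▸ Fintype.one_lt_card
  intro ℓ
  rw [hasseDeriv_mul]
  have hmap : ∀ (s : Finset (ℕ × ℕ)) (f : ℕ × ℕ → F[X]),
      (∑ ij ∈ s, f ij) %ₘ (X ^ q - X) = ∑ ij ∈ s, (f ij) %ₘ (X ^ q - X) := by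
    intro s f
    let φ : F[X] →+ F[X] :=
      { toFun := fun p => p %ₘ (X ^ q - X),
        map_zero' := zero_modByMonic _,
        map_add' := fun a b => add_modByMonic a b }
    exact map_sum φ f s
  rw [hmap]
  refine (degree_sum_le _ _).trans (Finset.sup_le ?_)
  intro ij _
  exact mod_mul_degree_le hq2 _ _ (hA ij.1) (hB ij.2)
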